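/- For g = osp(1|2n) and any finite-dimensional g-module V, the subspaces A_•^{(1)}, …, A_•^{(n)} and B_•^{(1)}, …, B_•^{(n)} of C_•(n̄, V) are linearly independent; setting A_• = ⊕_j A_•^{(j)} and B_• = ⊕_j B_•^{(j)}, one has W_•(n̄, V) = A_• ⊕ B_•, and A_k ≅ B_{k−1} as h-modules for every k ∈ ℕ. -/

import Mathlib

noncomputable section

/-- The positive roots of `osp(1|2n)`: the even roots `δ_i − δ_j` (`i < j`) and
`δ_i + δ_j` (`i ≤ j`, giving `2δ_i` when `i = j`), and the odd roots `δ_i`.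
For each positive root `α` we have the fixed negative root vector `Y_α ∈ n̄` of weight `−α`,
normalised so that `[Y_{δ_i}, Y_{δ_i}] = Y_{2δ_i}`. -/
inductive OspRoot (n : ℕ) : Type
  | diff : (i j : Fin n) → i < j → OspRoot n
  | sum : (i j : Fin n) → i ≤ j → OspRoot n
  | odd : Fin n → OspRoot n

instance {n : ℕ} : DecidableEq (OspRoot n) := fun _ _ => Classical.dec _

/-- whether a positive root is odd -/
def OspRoot.IsOdd {n : ℕ} : OspRoot n → Prop
  | .odd _ => True
  | _ => False

/-- the root `2δ_i` -/
def OspRoot.dd {n : ℕ} (i : Fin n) : OspRoot n := .sum i i le_rfl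

/-- a positive root as an element of the weight lattice `ℤⁿ` (coordinates w.r.t. `δ₁, …, δₙ`) -/
def rootVecZ {n : ℕ} : OspRoot n → (Fin n → ℤ)
  | .diff i j _ => fun t => (if t = i then 1 else 0) - (if t = j then 1 else 0)
  | .sum i j _ => fun t => (if t = i then 1 else 0) + (if t = j then 1 else 0)
  | .odd i => fun t => if t = i then 1 else 0

/-- A basis monomial `Y_{α₁} ∧ ⋯ ∧ Y_{α_d} ⊗ v` of the super exterior algebra chain space
`C_•(n̄, V) = Λ^• n̄ ⊗ V`: a multiset of positive roots in which every even root occurs at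
most once (odd root vectors have nonvanishing wedge powers), together with a basis weight
vector of `V` (indexed by `ι`). -/
def ChainBasis (n : ℕ) (ι : Type) : Type :=
  {m : OspRoot n →₀ ℕ // ∀ r : OspRoot n, ¬ r.IsOdd → m r ≤ 1} × ι

/-- the space of chains `C_•(n̄, V) = Λ^• n̄ ⊗ V`, as the free `ℂ`-vector space on the
basis monomials -/
def Chains (n : ℕ) (ι : Type) : Type := ChainBasis n ι →₀ ℂ

instance {n : ℕ} {ι : Type} : AddCommGroup (Chains n ι) := Finsupp.instAddCommGroup
instance {n : ℕ} {ι : Type} : Module ℂ (Chains n ι) := Finsupp.module _ _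

/-- the degree of a monomial in `Λ^• n̄` (number of wedge factors) -/
def degOf {n : ℕ} (m : OspRoot n →₀ ℕ) : ℕ := m.sum fun _ k => k

/-- the monomial contains `Y_{2δ_i}` or `Y_{δ_i}^{∧2}` for some `i`
(i.e. it lies in `W_•(n̄,V)`) -/
def Wcond {n : ℕ} (m : OspRoot n →₀ ℕ) : Prop :=
  ∃ i : Fin n, 1 ≤ m (.dd i) ∨ 2 ≤ m (.odd i)

/-- the monomial contains no `Y_{2δ_i}` and no `Y_{δ_i}^{∧2}`
(i.e. it lies in `R_•(n̄,V)`) -/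
def Rcond {n : ℕ} (m : OspRoot n →₀ ℕ) : Prop :=
  ∀ i : Fin n, m (.dd i) = 0 ∧ m (.odd i) ≤ 1

/-- the monomial is of the form `Y_{δ_j}^{∧2} ∧ f` where `f` contains no `Y_{2δ_j}`,
nor any `Y_{2δ_i}` or `Y_{δ_i}^{∧2}` with `i < j` (i.e. it lies in `A_•^{(j)}`) -/
def Acond {n : ℕ} (j : Fin n) (m : OspRoot n →₀ ℕ) : Prop :=
  2 ≤ m (.odd j) ∧ m (.dd j) = 0 ∧ ∀ i : Fin n, i < j → m (.dd i) = 0 ∧ m (.odd i) ≤ 1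

/-- the monomial is of the form `Y_{2δ_j} ∧ f` where `f` contains no `Y_{2δ_i}` or
`Y_{δ_i}^{∧2}` with `i < j` (i.e. it lies in `B_•^{(j)}`) -/
def Bcond {n : ℕ} (j : Fin n) (m : OspRoot n →₀ ℕ) : Prop :=
  1 ≤ m (.dd j) ∧ ∀ i : Fin n, i < j → m (.dd i) = 0 ∧ m (.odd i) ≤ 1

/-- the `ℂ`-span of the monomials in `C_•(n̄,V)` satisfying a given condition on the
wedge part -/
def monSpan {n : ℕ} {ι : Type} (P : (OspRoot n →₀ ℕ) → Prop) : Submodule ℂ (Chains n ι) :=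
  Finsupp.supported ℂ ℂ {p : ChainBasis n ι | P p.1.1}

/-- the weight of a basis monomial, as an `h`-module: `wt(v) − Σ α_k` -/
def wtOf {n : ℕ} {ι : Type} (wt : ι → Fin n → ℤ) (p : ChainBasis n ι) : Fin n → ℤ :=
  wt p.2 - p.1.1.sum fun r k => (k : ℤ) • rootVecZ r

/-- the contribution of a single root vector factor to the grading `D`:
`+1` for `Y_α` with `α ∈ M = {δ_i−δ_j | i<j}`, `−1` for `α ∈ P = {δ_i+δ_j | i<j}`,
`0` otherwise -/
def rootD {n : ℕ} : OspRoot n → ℤ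
  | .diff _ _ _ => 1
  | .sum i j _ => if i = j then 0 else -1
  | .odd _ => 0

/-- the grading `D` of a basis monomial `Y_{α₁} ∧ ⋯ ∧ Y_{α_d} ⊗ v`:
`#{k | α_k ∈ M} − #{k | α_k ∈ P} + D(v)`, where `D(v) = Σ_i μ_i` for `v` of weight
`Σ_i μ_i δ_i` -/
def Dgrade {n : ℕ} {ι : Type} (wt : ι → Fin n → ℤ) (p : ChainBasis n ι) : ℤ :=
  (p.1.1.sum fun r k => (k : ℤ) * rootD r) + ∑ i, wt p.2 i

/-- The chain complex `C_•(n̄, V) = Λ^• n̄ ⊗ V` of a finite dimensional `h + n̄`-module `V`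
over `osp(1|2n)` (e.g. an `osp(1|2n)`-module), with its boundary operator.

`V` has a basis of weight vectors indexed by `ι` with weights `wt`; `wedge β` is (up to
sign) left exterior multiplication by the root vector `Y_β` on `Λ^• n̄ ⊗ V`; `Yact β` is
the action of `Y_β ∈ n̄` on `Λ^• n̄ ⊗ V` (adjoint action on `Λ^• n̄` tensored with the action
on `V`) — it replaces a wedge factor `Y_γ` by `[Y_β, Y_γ]` (a multiple of `Y_{β+γ}`) or acts
on the `V`-factor (lowering its weight by `β`); and `d` is the boundary operator, determined
by `δ*₀ = 0` and `δ*(Y ∧ f) = −Y·f − Y ∧ δ*(f)`. -/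
structure ChainData (n : ℕ) where
  /-- index of a basis of weight vectors of `V` -/
  ι : Type
  [fintypeV : Fintype ι]
  /-- the weights of the basis vectors of `V` -/
  wt : ι → Fin n → ℤ
  /-- exterior multiplication by `Y_β` -/
  wedge : OspRoot n → Chains n ι →ₗ[ℂ] Chains n ι
  wedge_spec : ∀ (β : OspRoot n) (p : ChainBasis n ι),
    (¬ β.IsOdd ∧ p.1.1 β = 1 ∧ wedge β (Finsupp.single p 1) = 0) ∨
    (∃ (ε : ℂ) (h : ∀ r : OspRoot n, ¬ r.IsOdd → (p.1.1 + Finsupp.single β 1 : OspRoot n →₀ ℕ) r ≤ 1),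
      (ε = 1 ∨ ε = -1) ∧
      wedge β (Finsupp.single p 1) =
        Finsupp.single (⟨⟨p.1.1 + Finsupp.single β 1, h⟩, p.2⟩ : ChainBasis n ι) ε)
  /-- the action of the root vector `Y_β ∈ n̄` on `Λ^• n̄ ⊗ V` -/
  Yact : OspRoot n → Chains n ι →ₗ[ℂ] Chains n ι
  Yact_spec : ∀ (β : OspRoot n) (p : ChainBasis n ι),
    Yact β (Finsupp.single p 1) ∈ Finsupp.supported ℂ ℂ
      {q : ChainBasis n ι |
        (∃ γ ρ' : OspRoot n, p.1.1 γ ≠ 0 ∧ rootVecZ ρ' = rootVecZ β + rootVecZ γ ∧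
           q.1.1 + Finsupp.single γ 1 = p.1.1 + Finsupp.single ρ' 1 ∧ q.2 = p.2) ∨
        (q.1 = p.1 ∧ wt q.2 = wt p.2 - rootVecZ β)}
  /-- the boundary operator `δ*` of the chain complex `C_•(n̄, V)` -/
  d : Chains n ι →ₗ[ℂ] Chains n ι
  d_zero : ∀ p : ChainBasis n ι, degOf p.1.1 = 0 → d (Finsupp.single p 1) = 0
  d_rec : ∀ (β : OspRoot n) (f : Chains n ι),
    d (wedge β f) = - Yact β f - wedge β (d f)

attribute [instance] ChainData.fintypeV

namespace ChainData

variable {n : ℕ} (D : ChainData n)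

/-- the subspace `R_•(n̄, V)` of `C_•(n̄,V)`: the span of the monomials containing no
`Y_{2δ_i}` and no `Y_{δ_i}^{∧2}` -/
def Rsub : Submodule ℂ (Chains n D.ι) := monSpan Rcond

/-- the subspace `A_• = ⊕_j A_•^{(j)}` of `C_•(n̄,V)` -/
def Asub : Submodule ℂ (Chains n D.ι) := monSpan (fun m => ∃ j : Fin n, Acond j m)

/-- the subspace `B_• = ⊕_j B_•^{(j)}` of `C_•(n̄,V)` -/
def Bsub : Submodule ℂ (Chains n D.ι) := monSpan (fun m => ∃ j : Fin n, Bcond j m)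

end ChainData

/-- the span of the monomials of wedge degree `k` satisfying a given condition on the
wedge part: the degree-`k` graded piece (in `C_k(n̄,V) = Λ^k n̄ ⊗ V`) of `monSpan P` -/
def monSpanDeg {n : ℕ} {ι : Type} (P : (OspRoot n →₀ ℕ) → Prop) (k : ℕ) :
    Submodule ℂ (Chains n ι) :=
  Finsupp.supported ℂ ℂ {p : ChainBasis n ι | P p.1.1 ∧ degOf p.1.1 = k}

/-- the `μ`-weight space of `C_•(n̄, V)` as an `h`-module -/
def weightSub {n : ℕ} {ι : Type} (wt : ι → Fin n → ℤ) (μ : Fin n → ℤ) :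
    Submodule ℂ (Chains n ι) :=
  Finsupp.supported ℂ ℂ {p : ChainBasis n ι | wtOf wt p = μ}


section Aux

open Finsupp

variable {n : ℕ} {ι : Type}

lemma dd_ne_odd (i j : Fin n) : OspRoot.dd i ≠ OspRoot.odd j := by
  simp [OspRoot.dd]

lemma dd_inj {i j : Fin n} (h : OspRoot.dd i = OspRoot.dd j) : i = j := by
  simp only [OspRoot.dd, OspRoot.sum.injEq] at h
  exact h.1

lemma odd_inj {i j : Fin n} (h : (OspRoot.odd i : OspRoot n) = OspRoot.odd j) : i = j := by
  cases h; rfl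

lemma dd_not_odd (j : Fin n) : ¬ (OspRoot.dd j).IsOdd := fun h => h

lemma Acond_unique {j j' : Fin n} {m : OspRoot n →₀ ℕ} (h : Acond j m) (h' : Acond j' m) :
    j = j' := by
  by_contra hne
  rcases lt_or_gt_of_ne hne with hlt | hlt
  · have h1 := (h'.2.2 j hlt).2; have h2 := h.1; omega
  · have h1 := (h.2.2 j' hlt).2; have h2 := h'.1; omega

lemma Bcond_unique {j j' : Fin n} {m : OspRoot n →₀ ℕ} (h : Bcond j m) (h' : Bcond j' m) :
    j = j' := by
  by_contra hne
  rcases lt_or_gt_of_ne hne with hlt | hlt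
  · have h1 := (h'.2 j hlt).1; have h2 := h.1; omega
  · have h1 := (h.2 j' hlt).1; have h2 := h'.1; omega

lemma Acond_Bcond_ne {j j' : Fin n} {m : OspRoot n →₀ ℕ} (h : Acond j m) (h' : Bcond j' m) :
    False := by
  rcases lt_trichotomy j j' with hlt | rfl | hlt
  · have h1 := (h'.2 j hlt).2; have h2 := h.1; omega
  · have h1 := h.2.1; have h2 := h'.1; omega
  · have h1 := (h.2.2 j' hlt).1; have h2 := h'.1; omega

lemma Wcond_iff {m : OspRoot n →₀ ℕ} :
    Wcond m ↔ (∃ j, Acond j m) ∨ (∃ j, Bcond j m) := by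
  constructor
  · rintro ⟨i, hi⟩
    obtain ⟨j, hjS, hjmin⟩ := (wellFounded_lt (α := Fin n)).has_min
      {i | 1 ≤ m (.dd i) ∨ 2 ≤ m (.odd i)} ⟨i, hi⟩
    have hmin : ∀ i', i' < j → m (.dd i') = 0 ∧ m (.odd i') ≤ 1 := by
      intro i' h'
      have h2 : ¬(1 ≤ m (.dd i') ∨ 2 ≤ m (.odd i')) := fun hmem => hjmin i' hmem h'
      omega
    by_cases hdd : 1 ≤ m (.dd j)
    · exact Or.inr ⟨j, hdd, hmin⟩
    · have hodd : 2 ≤ m (.odd j) := by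
        rcases hjS with h1 | h1
        · omega
        · exact h1
      exact Or.inl ⟨j, hodd, by omega, hmin⟩
  · rintro (⟨j, hj⟩ | ⟨j, hj⟩)
    · exact ⟨j, Or.inr hj.1⟩
    · exact ⟨j, Or.inl hj.1⟩

/-- replace `Y_{δj}^{∧2}` by `Y_{2δj}` -/
def Amove (j : Fin n) (m : OspRoot n →₀ ℕ) : OspRoot n →₀ ℕ :=
  m - Finsupp.single (.odd j) 2 + Finsupp.single (.dd j) 1

/-- replace `Y_{2δj}` by `Y_{δj}^{∧2}` -/
def Bmove (j : Fin n) (m : OspRoot n →₀ ℕ) : OspRoot n →₀ ℕ :=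
  m - Finsupp.single (.dd j) 1 + Finsupp.single (.odd j) 2

lemma Amove_apply_odd (j : Fin n) (m : OspRoot n →₀ ℕ) :
    Amove j m (.odd j) = m (.odd j) - 2 := by
  simp [Amove, Finsupp.tsub_apply, Finsupp.single_eq_same,
    Finsupp.single_eq_of_ne' (dd_ne_odd j j)]

lemma Amove_apply_dd (j : Fin n) (m : OspRoot n →₀ ℕ) :
    Amove j m (.dd j) = m (.dd j) + 1 := by
  simp [Amove, Finsupp.tsub_apply, Finsupp.single_eq_same,
    Finsupp.single_eq_of_ne' (dd_ne_odd j j).symm]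

lemma Amove_apply_other (j : Fin n) (m : OspRoot n →₀ ℕ) {r : OspRoot n}
    (h1 : r ≠ .odd j) (h2 : r ≠ .dd j) : Amove j m r = m r := by
  simp [Amove, Finsupp.tsub_apply, Finsupp.single_eq_of_ne' (Ne.symm h1),
    Finsupp.single_eq_of_ne' (Ne.symm h2)]

lemma Bmove_apply_odd (j : Fin n) (m : OspRoot n →₀ ℕ) :
    Bmove j m (.odd j) = m (.odd j) + 2 := by
  simp [Bmove, Finsupp.tsub_apply, Finsupp.single_eq_same,
    Finsupp.single_eq_of_ne' (dd_ne_odd j j)]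

lemma Bmove_apply_dd (j : Fin n) (m : OspRoot n →₀ ℕ) :
    Bmove j m (.dd j) = m (.dd j) - 1 := by
  simp [Bmove, Finsupp.tsub_apply, Finsupp.single_eq_same,
    Finsupp.single_eq_of_ne' (dd_ne_odd j j).symm]

lemma Bmove_apply_other (j : Fin n) (m : OspRoot n →₀ ℕ) {r : OspRoot n}
    (h1 : r ≠ .odd j) (h2 : r ≠ .dd j) : Bmove j m r = m r := by
  simp [Bmove, Finsupp.tsub_apply, Finsupp.single_eq_of_ne' (Ne.symm h1),
    Finsupp.single_eq_of_ne' (Ne.symm h2)]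

lemma Amove_bound (j : Fin n) {m : OspRoot n →₀ ℕ} (hA : Acond j m)
    (hb : ∀ r : OspRoot n, ¬ r.IsOdd → m r ≤ 1) :
    ∀ r : OspRoot n, ¬ r.IsOdd → Amove j m r ≤ 1 := by
  intro r hr
  by_cases h2 : r = .dd j
  · subst h2
    rw [Amove_apply_dd]
    have := hA.2.1; omega
  · have h1 : r ≠ .odd j := by rintro rfl; exact hr trivial
    rw [Amove_apply_other j m h1 h2]
    exact hb r hr

lemma Bmove_bound (j : Fin n) {m : OspRoot n →₀ ℕ}
    (hb : ∀ r : OspRoot n, ¬ r.IsOdd → m r ≤ 1) :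
    ∀ r : OspRoot n, ¬ r.IsOdd → Bmove j m r ≤ 1 := by
  intro r hr
  by_cases h2 : r = .dd j
  · subst h2
    rw [Bmove_apply_dd]
    have := hb _ (dd_not_odd j); omega
  · have h1 : r ≠ .odd j := by rintro rfl; exact hr trivial
    rw [Bmove_apply_other j m h1 h2]
    exact hb r hr

lemma ne_helpers {i j : Fin n} (hij : i < j) :
    (OspRoot.dd i ≠ OspRoot.odd j) ∧ (OspRoot.dd i ≠ OspRoot.dd j) ∧
    ((OspRoot.odd i : OspRoot n) ≠ .odd j) ∧ ((OspRoot.odd i : OspRoot n) ≠ .dd j) := by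
  refine ⟨dd_ne_odd i j, fun h => absurd (dd_inj h) (ne_of_lt hij), ?_, (dd_ne_odd j i).symm⟩
  intro h; exact (ne_of_lt hij) (odd_inj h)

lemma Amove_Bcond (j : Fin n) {m : OspRoot n →₀ ℕ} (hA : Acond j m) :
    Bcond j (Amove j m) := by
  refine ⟨by rw [Amove_apply_dd]; omega, fun i hi => ?_⟩
  obtain ⟨e1, e2, e3, e4⟩ := ne_helpers hi
  rw [Amove_apply_other j m e1 e2, Amove_apply_other j m e3 e4]
  exact hA.2.2 i hi

lemma Bmove_Acond (j : Fin n) {m : OspRoot n →₀ ℕ} (hB : Bcond j m)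
    (hb : ∀ r : OspRoot n, ¬ r.IsOdd → m r ≤ 1) :
    Acond j (Bmove j m) := by
  have hdd := hb _ (dd_not_odd j)
  refine ⟨by rw [Bmove_apply_odd]; omega, by rw [Bmove_apply_dd]; omega, fun i hi => ?_⟩
  obtain ⟨e1, e2, e3, e4⟩ := ne_helpers hi
  rw [Bmove_apply_other j m e1 e2, Bmove_apply_other j m e3 e4]
  exact hB.2 i hi

lemma Bmove_Amove (j : Fin n) {m : OspRoot n →₀ ℕ} (hA : Acond j m) :
    Bmove j (Amove j m) = m := by
  ext r
  by_cases h1 : r = .odd j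
  · subst h1
    rw [Bmove_apply_odd, Amove_apply_odd]
    have := hA.1; omega
  · by_cases h2 : r = .dd j
    · subst h2
      rw [Bmove_apply_dd, Amove_apply_dd]
      omega
    · rw [Bmove_apply_other j _ h1 h2, Amove_apply_other j m h1 h2]

lemma Amove_Bmove (j : Fin n) {m : OspRoot n →₀ ℕ} (hB : Bcond j m)
    (hb : ∀ r : OspRoot n, ¬ r.IsOdd → m r ≤ 1) :
    Amove j (Bmove j m) = m := by
  have hdd := hb _ (dd_not_odd j)
  have hdd1 := hB.1
  ext r
  by_cases h1 : r = .odd j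
  · subst h1
    rw [Amove_apply_odd, Bmove_apply_odd]
    omega
  · by_cases h2 : r = .dd j
    · subst h2
      rw [Amove_apply_dd, Bmove_apply_dd]
      omega
    · rw [Amove_apply_other j _ h1 h2, Bmove_apply_other j m h1 h2]

lemma degOf_add (a b : OspRoot n →₀ ℕ) : degOf (a + b) = degOf a + degOf b :=
  Finsupp.sum_add_index' (fun _ => rfl) (fun _ _ _ => rfl)

lemma degOf_single (a : OspRoot n) (k : ℕ) : degOf (Finsupp.single a k) = k :=
  Finsupp.sum_single_index rfl

lemma Amove_deg (j : Fin n) {m : OspRoot n →₀ ℕ} (hA : Acond j m) :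
    degOf (Amove j m) + 1 = degOf m := by
  have hle : Finsupp.single (OspRoot.odd j) 2 ≤ m := Finsupp.single_le_iff.mpr hA.1
  have hm : m - Finsupp.single (.odd j) 2 + Finsupp.single (.odd j) 2 = m :=
    tsub_add_cancel_of_le hle
  have h1 : degOf (Amove j m) = degOf (m - Finsupp.single (.odd j) 2) + 1 := by
    rw [Amove, degOf_add, degOf_single]
  have h2 : degOf m = degOf (m - Finsupp.single (.odd j) 2) + 2 := by
    conv_lhs => rw [← hm]
    rw [degOf_add, degOf_single]
  omega

lemma Bmove_deg (j : Fin n) {m : OspRoot n →₀ ℕ} (hB : Bcond j m) :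
    degOf (Bmove j m) = degOf m + 1 := by
  have hle : Finsupp.single (OspRoot.dd j) 1 ≤ m := Finsupp.single_le_iff.mpr hB.1
  have hm : m - Finsupp.single (.dd j) 1 + Finsupp.single (.dd j) 1 = m :=
    tsub_add_cancel_of_le hle
  have h1 : degOf (Bmove j m) = degOf (m - Finsupp.single (.dd j) 1) + 2 := by
    rw [Bmove, degOf_add, degOf_single]
  have h2 : degOf m = degOf (m - Finsupp.single (.dd j) 1) + 1 := by
    conv_lhs => rw [← hm]
    rw [degOf_add, degOf_single]
  omega

lemma sum_smul_add (a b : OspRoot n →₀ ℕ) :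
    ((a + b).sum fun r k => (k : ℤ) • rootVecZ r) =
      (a.sum fun r k => (k : ℤ) • rootVecZ r) + b.sum fun r k => (k : ℤ) • rootVecZ r :=
  Finsupp.sum_add_index' (fun _ => by simp) (fun r b1 b2 => by push_cast; rw [add_smul])

lemma sum_smul_single (a : OspRoot n) (k : ℕ) :
    ((Finsupp.single a k).sum fun r k => (k : ℤ) • rootVecZ r) = (k : ℤ) • rootVecZ a :=
  Finsupp.sum_single_index (by simp)

lemma rootVecZ_dd (j : Fin n) :
    rootVecZ (OspRoot.dd j) = (2 : ℤ) • rootVecZ (OspRoot.odd j) := by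
  funext t
  by_cases h : t = j <;> simp [rootVecZ, OspRoot.dd, h, two_smul]

lemma Amove_wsum (j : Fin n) {m : OspRoot n →₀ ℕ} (hA : Acond j m) :
    ((Amove j m).sum fun r k => (k : ℤ) • rootVecZ r) =
      m.sum fun r k => (k : ℤ) • rootVecZ r := by
  have hle : Finsupp.single (OspRoot.odd j) 2 ≤ m := Finsupp.single_le_iff.mpr hA.1
  have hm : m - Finsupp.single (.odd j) 2 + Finsupp.single (.odd j) 2 = m :=
    tsub_add_cancel_of_le hle
  conv_rhs => rw [← hm]
  rw [Amove, sum_smul_add, sum_smul_add, sum_smul_single, sum_smul_single, rootVecZ_dd]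
  norm_num

open scoped Classical in
/-- the bijection `A_{k+1} → B_k`, extended by the identity off `A` -/
def FA (p : ChainBasis n ι) : ChainBasis n ι :=
  if h : ∃ j, Acond j p.1.1 then
    ⟨⟨Amove h.choose p.1.1, Amove_bound h.choose h.choose_spec p.1.2⟩, p.2⟩
  else p

open scoped Classical in
/-- the bijection `B_k → A_{k+1}`, extended by the identity off `B` -/
def GB (p : ChainBasis n ι) : ChainBasis n ι :=
  if h : ∃ j, Bcond j p.1.1 then
    ⟨⟨Bmove h.choose p.1.1, Bmove_bound h.choose p.1.2⟩, p.2⟩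
  else p

lemma FA_fst (p : ChainBasis n ι) (h : ∃ j, Acond j p.1.1) :
    (FA p).1.1 = Amove h.choose p.1.1 := by
  unfold FA; exact congrArg (fun q : ChainBasis n ι => q.1.1) (dif_pos h)

lemma FA_snd (p : ChainBasis n ι) (h : ∃ j, Acond j p.1.1) : (FA p).2 = p.2 := by
  unfold FA; exact (congrArg (fun q : ChainBasis n ι => q.2) (dif_pos h)).trans rfl

lemma GB_fst (p : ChainBasis n ι) (h : ∃ j, Bcond j p.1.1) :
    (GB p).1.1 = Bmove h.choose p.1.1 := by
  unfold GB; exact congrArg (fun q : ChainBasis n ι => q.1.1) (dif_pos h)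

lemma GB_snd (p : ChainBasis n ι) (h : ∃ j, Bcond j p.1.1) : (GB p).2 = p.2 := by
  unfold GB; exact (congrArg (fun q : ChainBasis n ι => q.2) (dif_pos h)).trans rfl

lemma FA_Bcond (p : ChainBasis n ι) (h : ∃ j, Acond j p.1.1) :
    ∃ j, Bcond j (FA p).1.1 := by
  rw [FA_fst p h]
  exact ⟨h.choose, Amove_Bcond h.choose h.choose_spec⟩

lemma GB_Acond (p : ChainBasis n ι) (h : ∃ j, Bcond j p.1.1) :
    ∃ j, Acond j (GB p).1.1 := by
  rw [GB_fst p h]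
  exact ⟨h.choose, Bmove_Acond h.choose h.choose_spec p.1.2⟩

lemma GB_FA (p : ChainBasis n ι) (h : ∃ j, Acond j p.1.1) : GB (FA p) = p := by
  have h' : ∃ j, Bcond j (FA p).1.1 := FA_Bcond p h
  have hB : Bcond h.choose (FA p).1.1 := by
    rw [FA_fst p h]; exact Amove_Bcond h.choose h.choose_spec
  have hjj : h'.choose = h.choose := Bcond_unique h'.choose_spec hB
  refine Prod.ext (Subtype.ext ?_) (by rw [GB_snd _ h', FA_snd p h])
  rw [GB_fst _ h', hjj, FA_fst p h]
  exact Bmove_Amove h.choose h.choose_spec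

lemma FA_GB (p : ChainBasis n ι) (h : ∃ j, Bcond j p.1.1) : FA (GB p) = p := by
  have h' : ∃ j, Acond j (GB p).1.1 := GB_Acond p h
  have hA : Acond h.choose (GB p).1.1 := by
    rw [GB_fst p h]; exact Bmove_Acond h.choose h.choose_spec p.1.2
  have hjj : h'.choose = h.choose := Acond_unique h'.choose_spec hA
  refine Prod.ext (Subtype.ext ?_) (by rw [FA_snd _ h', GB_snd p h])
  rw [FA_fst _ h', hjj, GB_fst p h]
  exact Amove_Bmove h.choose h.choose_spec p.1.2

lemma FA_deg (p : ChainBasis n ι) (h : ∃ j, Acond j p.1.1) :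
    degOf (FA p).1.1 + 1 = degOf p.1.1 := by
  rw [FA_fst p h]
  exact Amove_deg h.choose h.choose_spec

lemma FA_wt (wt : ι → Fin n → ℤ) (p : ChainBasis n ι) (h : ∃ j, Acond j p.1.1) :
    wtOf wt (FA p) = wtOf wt p := by
  unfold wtOf
  rw [FA_fst p h, FA_snd p h, Amove_wsum h.choose h.choose_spec]

end Aux

/-- For `g = osp(1|2n)` and any finite dimensional `g`-module `V` (with a basis of weight
vectors indexed by `ι`, of weights `wt`), the subspaces `A_•^{(1)}, …, A_•^{(n)}` and
`B_•^{(1)}, …, B_•^{(n)}` of `C_•(n̄, V)` are linearly independent; for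
`A_• = ⊕_j A_•^{(j)}` and `B_• = ⊕_j B_•^{(j)}` one has `W_•(n̄,V) = A_• ⊕ B_•`, and
`A_k ≅ B_{k−1}` as `h`-modules (i.e. by a weight-preserving linear isomorphism) for every
`k ∈ ℕ`. -/
theorem chains_AB_decomposition {n : ℕ} (ι : Type) [Fintype ι] (wt : ι → Fin n → ℤ) :
    iSupIndep (fun x : Fin n ⊕ Fin n =>
      Sum.elim (fun j => monSpan (n := n) (ι := ι) (Acond j))
        (fun j => monSpan (n := n) (ι := ι) (Bcond j)) x) ∧
    Disjoint (monSpan (n := n) (ι := ι) fun m => ∃ j : Fin n, Acond j m)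
      (monSpan (n := n) (ι := ι) fun m => ∃ j : Fin n, Bcond j m) ∧
    ((monSpan (n := n) (ι := ι) fun m => ∃ j : Fin n, Acond j m) ⊔
      (monSpan (n := n) (ι := ι) fun m => ∃ j : Fin n, Bcond j m) =
      monSpan (n := n) (ι := ι) Wcond) ∧
    ∀ k : ℕ, ∃ e : (monSpanDeg (n := n) (ι := ι) (fun m => ∃ j : Fin n, Acond j m) (k+1)) ≃ₗ[ℂ]
        (monSpanDeg (n := n) (ι := ι) (fun m => ∃ j : Fin n, Bcond j m) k),
      ∀ (μ : Fin n → ℤ) (x : monSpanDeg (n := n) (ι := ι) (fun m => ∃ j : Fin n, Acond j m) (k+1)),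
        (x : Chains n ι) ∈ weightSub wt μ → ((e x : Chains n ι) ∈ weightSub wt μ) := by
  classical
  have Smem : ∀ (p : ChainBasis n ι) (x y : Fin n ⊕ Fin n),
      p ∈ Sum.elim (fun j => {q : ChainBasis n ι | Acond j q.1.1})
        (fun j => {q : ChainBasis n ι | Bcond j q.1.1}) x →
      p ∈ Sum.elim (fun j => {q : ChainBasis n ι | Acond j q.1.1})
        (fun j => {q : ChainBasis n ι | Bcond j q.1.1}) y → x = y := by
    rintro p (jx | jx) (jy | jy) hx hy
    · exact congrArg Sum.inl (Acond_unique hx hy)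
    · exact (Acond_Bcond_ne hx hy).elim
    · exact (Acond_Bcond_ne hy hx).elim
    · exact congrArg Sum.inr (Bcond_unique hx hy)
  have key : ∀ y : Fin n ⊕ Fin n,
      Sum.elim (fun j => monSpan (n := n) (ι := ι) (Acond j))
        (fun j => monSpan (n := n) (ι := ι) (Bcond j)) y
      = Finsupp.supported ℂ ℂ (Sum.elim (fun j => {q : ChainBasis n ι | Acond j q.1.1})
          (fun j => {q : ChainBasis n ι | Bcond j q.1.1}) y) := by
    rintro (j | j) <;> rfl
  refine ⟨?_, ?_, ?_, ?_⟩
  · -- independence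
    intro x
    dsimp only
    rw [key x]
    have h1 : (⨆ (y : Fin n ⊕ Fin n) (_ : y ≠ x),
        Sum.elim (fun j => monSpan (n := n) (ι := ι) (Acond j))
          (fun j => monSpan (n := n) (ι := ι) (Bcond j)) y) ≤
        Finsupp.supported ℂ ℂ (⋃ (y : Fin n ⊕ Fin n) (_ : y ≠ x),
          Sum.elim (fun j => {q : ChainBasis n ι | Acond j q.1.1})
            (fun j => {q : ChainBasis n ι | Bcond j q.1.1}) y) := by
      refine iSup₂_le fun y hy => ?_
      rw [key y]
      refine Finsupp.supported_mono ?_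
      intro p hp
      exact Set.mem_iUnion₂.mpr ⟨y, hy, hp⟩
    refine Disjoint.mono_right h1 (Finsupp.disjoint_supported_supported ?_)
    rw [Set.disjoint_left]
    rintro p hp hq
    simp only [Set.mem_iUnion] at hq
    obtain ⟨y, hy, hpy⟩ := hq
    exact hy (Smem p y x hpy hp)
  · -- disjointness of A and B
    refine Finsupp.disjoint_supported_supported ?_
    rw [Set.disjoint_left]
    rintro p ⟨j, hA⟩ ⟨j', hB⟩
    exact Acond_Bcond_ne hA hB
  · -- A ⊔ B = W
    have hset : {p : ChainBasis n ι | ∃ j, Acond j p.1.1} ∪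
        {p : ChainBasis n ι | ∃ j, Bcond j p.1.1} = {p : ChainBasis n ι | Wcond p.1.1} := by
      ext p
      simp only [Set.mem_union, Set.mem_setOf_eq]
      exact Wcond_iff.symm
    unfold monSpan
    exact (Finsupp.supported_union _ _).symm.trans (congrArg (Finsupp.supported ℂ ℂ) hset)
  · -- the weight-preserving isomorphism
    intro k
    have hFAmem : ∀ p : ChainBasis n ι,
        p ∈ {q : ChainBasis n ι | (∃ j, Acond j q.1.1) ∧ degOf q.1.1 = k + 1} →
        FA p ∈ {q : ChainBasis n ι | (∃ j, Bcond j q.1.1) ∧ degOf q.1.1 = k} := by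
      rintro p ⟨h, hd⟩
      refine ⟨FA_Bcond p h, ?_⟩
      have := FA_deg p h
      omega
    have hGBmem : ∀ p : ChainBasis n ι,
        p ∈ {q : ChainBasis n ι | (∃ j, Bcond j q.1.1) ∧ degOf q.1.1 = k} →
        GB p ∈ {q : ChainBasis n ι | (∃ j, Acond j q.1.1) ∧ degOf q.1.1 = k + 1} := by
      rintro p ⟨h, hd⟩
      refine ⟨GB_Acond p h, ?_⟩
      rw [GB_fst p h, Bmove_deg h.choose h.choose_spec, hd]
    have hφmem : ∀ x : monSpanDeg (n := n) (ι := ι) (fun m => ∃ j : Fin n, Acond j m) (k+1),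
        ((Finsupp.lmapDomain ℂ ℂ FA).comp
          (Submodule.subtype _)) x ∈
          monSpanDeg (n := n) (ι := ι) (fun m => ∃ j : Fin n, Bcond j m) k := by
      intro x
      refine (Finsupp.mem_supported ℂ _).mpr ?_
      intro q hq
      simp only [LinearMap.comp_apply, Submodule.subtype_apply,
        Finsupp.lmapDomain_apply, Finset.mem_coe] at hq
      obtain ⟨p, hp, rfl⟩ := Finset.mem_image.mp (Finsupp.mapDomain_support hq)
      exact hFAmem p ((Finsupp.mem_supported ℂ _).mp x.2 (Finset.mem_coe.mpr hp))
    have hψmem : ∀ x : monSpanDeg (n := n) (ι := ι) (fun m => ∃ j : Fin n, Bcond j m) k,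
        ((Finsupp.lmapDomain ℂ ℂ GB).comp
          (Submodule.subtype _)) x ∈
          monSpanDeg (n := n) (ι := ι) (fun m => ∃ j : Fin n, Acond j m) (k+1) := by
      intro x
      refine (Finsupp.mem_supported ℂ _).mpr ?_
      intro q hq
      simp only [LinearMap.comp_apply, Submodule.subtype_apply,
        Finsupp.lmapDomain_apply, Finset.mem_coe] at hq
      obtain ⟨p, hp, rfl⟩ := Finset.mem_image.mp (Finsupp.mapDomain_support hq)
      exact hGBmem p ((Finsupp.mem_supported ℂ _).mp x.2 (Finset.mem_coe.mpr hp))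
    refine ⟨LinearEquiv.ofLinear
      (LinearMap.codRestrict _ ((Finsupp.lmapDomain ℂ ℂ FA).comp (Submodule.subtype _)) hφmem)
      (LinearMap.codRestrict _ ((Finsupp.lmapDomain ℂ ℂ GB).comp (Submodule.subtype _)) hψmem)
      ?_ ?_, ?_⟩
    · refine LinearMap.ext fun x => Subtype.ext ?_
      have hsub := (Finsupp.mem_supported ℂ ((x : Chains n ι))).mp x.2
      show Finsupp.mapDomain FA (Finsupp.mapDomain GB ((x : Chains n ι))) = (x : Chains n ι)
      refine Finsupp.mapDomain_comp.symm.trans ?_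
      have hcongr : Finsupp.mapDomain (FA ∘ GB) ((x : Chains n ι)) =
          Finsupp.mapDomain id ((x : Chains n ι)) :=
        Finsupp.mapDomain_congr fun p hp => FA_GB p (hsub (Finset.mem_coe.mpr hp)).1
      exact hcongr.trans Finsupp.mapDomain_id
    · refine LinearMap.ext fun x => Subtype.ext ?_
      have hsub := (Finsupp.mem_supported ℂ ((x : Chains n ι))).mp x.2
      show Finsupp.mapDomain GB (Finsupp.mapDomain FA ((x : Chains n ι))) = (x : Chains n ι)
      refine Finsupp.mapDomain_comp.symm.trans ?_
      have hcongr : Finsupp.mapDomain (GB ∘ FA) ((x : Chains n ι)) =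
          Finsupp.mapDomain id ((x : Chains n ι)) :=
        Finsupp.mapDomain_congr fun p hp => GB_FA p (hsub (Finset.mem_coe.mpr hp)).1
      exact hcongr.trans Finsupp.mapDomain_id
    · intro μ x hx
      have hx' := (Finsupp.mem_supported ℂ ((x : Chains n ι))).mp hx
      have hxA := (Finsupp.mem_supported ℂ ((x : Chains n ι))).mp x.2
      show Finsupp.mapDomain FA ((x : Chains n ι)) ∈ weightSub wt μ
      refine (Finsupp.mem_supported ℂ _).mpr ?_
      intro q hq
      obtain ⟨p, hp, rfl⟩ := Finset.mem_image.mp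
        (Finsupp.mapDomain_support (Finset.mem_coe.mp hq))
      show wtOf wt (FA p) = μ
      rw [FA_wt wt p (hxA (Finset.mem_coe.mpr hp)).1]
      exact hx' (Finset.mem_coe.mpr hp)

end
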